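/- Let ℓ ≥ 0 be an integer and let ω = exp(2πi/3) ∈ ℂ. For each k ∈ {1,2}, the number of tuples m ∈ X_{E_6}(ℓ) satisfying m_0 = m_1 = m_6 and m_2 = m_3 = m_5 equals the complex number ∑_{m ∈ X_{E_6}(ℓ)} ω^{k·(m_1 + 2m_3 + m_5 + 2m_6)}. (This is the cyclic sieving phenomenon of type E_6^{(1)}.) -/

import Mathlib

open Finset

lemma zmod3 {ζ : ℂ} (hζ3 : ζ^3 = 1) (n : ℕ) : ζ^n = ζ^(n%3) := by
  conv_lhs => rw [← Nat.div_add_mod n 3]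
  rw [pow_add, pow_mul, hζ3, one_pow, one_mul]

lemma zsum3 {ζ : ℂ} (hζ3 : ζ^3 = 1) (hζ1 : ζ ≠ 1) : 1 + ζ + ζ^2 = 0 := by
  have h : (ζ - 1) * (1 + ζ + ζ^2) = 0 := by linear_combination hζ3
  rcases mul_eq_zero.1 h with h | h
  · exact absurd (sub_eq_zero.1 h) hζ1
  · exact h

lemma lay1 {ζ : ℂ} (hζ3 : ζ^3 = 1) (hζ1 : ζ ≠ 1) (s : ℕ) :
    ∑ x ∈ range (s+1), ζ^(x + 2*(s-x)) =
      if s % 3 = 0 then 1 else if s % 3 = 1 then -1 else 0 := by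
  have hs := zsum3 hζ3 hζ1
  induction s with
  | zero => simp
  | succ s ih =>
    rw [Finset.sum_range_succ]
    have h1 : ∀ x ∈ range (s+1), ζ^(x + 2*(s+1-x)) = ζ^(x + 2*(s-x)) * ζ^2 := by
      intro x hx
      rw [mem_range] at hx
      rw [show x + 2*(s+1-x) = (x + 2*(s-x)) + 2 by omega, pow_add]
    rw [Finset.sum_congr rfl h1, ← Finset.sum_mul, ih,
      show (s+1) + 2*(s+1-(s+1)) = s+1 by omega, zmod3 hζ3 (s+1)]
    have h3 : s % 3 = 0 ∨ s % 3 = 1 ∨ s % 3 = 2 := by omega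
    rcases h3 with h | h | h
    · rw [if_pos h, show (s+1) % 3 = 1 by omega, if_neg (by norm_num),
        if_pos rfl, pow_one]
      linear_combination hs
    · rw [if_neg (by omega), if_pos h, show (s+1) % 3 = 2 by omega,
        if_neg (by norm_num), if_neg (by norm_num)]
      ring
    · rw [if_neg (by omega), if_neg (by omega), show (s+1) % 3 = 0 by omega,
        if_pos rfl, pow_zero]
      ring

lemma lay2 {ζ : ℂ} (hζ3 : ζ^3 = 1) (hζ1 : ζ ≠ 1) (s : ℕ) :
    ∑ x ∈ range (s+1), ζ^(2*x + (s-x)) =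
      if s % 3 = 0 then 1 else if s % 3 = 1 then -1 else 0 := by
  have hs := zsum3 hζ3 hζ1
  induction s with
  | zero => simp
  | succ s ih =>
    rw [Finset.sum_range_succ]
    have h1 : ∀ x ∈ range (s+1), ζ^(2*x + (s+1-x)) = ζ^(2*x + (s-x)) * ζ := by
      intro x hx
      rw [mem_range] at hx
      rw [show 2*x + (s+1-x) = (2*x + (s-x)) + 1 by omega, pow_add, pow_one]
    rw [Finset.sum_congr rfl h1, ← Finset.sum_mul, ih,
      show 2*(s+1) + (s+1-(s+1)) = 2*(s+1) by omega, zmod3 hζ3 (2*(s+1))]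
    have h3 : s % 3 = 0 ∨ s % 3 = 1 ∨ s % 3 = 2 := by omega
    rcases h3 with h | h | h
    · rw [if_pos h, show (2*(s+1)) % 3 = 2 by omega, if_neg (show ¬((s+1)%3 = 0) by omega),
        if_pos (show (s+1)%3 = 1 by omega)]
      linear_combination hs
    · rw [if_neg (by omega), if_pos h, show (2*(s+1)) % 3 = 1 by omega, pow_one,
        if_neg (show ¬((s+1)%3 = 0) by omega), if_neg (show ¬((s+1)%3 = 1) by omega)]
      ring
    · rw [if_neg (by omega), if_neg (by omega), show (2*(s+1)) % 3 = 0 by omega,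
        pow_zero, if_pos (show (s+1)%3 = 0 by omega)]
      ring

lemma D1 {ζ : ℂ} (hζ3 : ζ^3 = 1) (hζ1 : ζ ≠ 1) (a : ℕ) :
    ∑ x ∈ range (a+1), ∑ y ∈ range (a+1-x), ζ^(x + 2*y) =
      if 3 ∣ a then 1 else 0 := by
  induction a with
  | zero => simp
  | succ a ih =>
    have step : ∀ x ∈ range (a+2), ∑ y ∈ range (a+2-x), ζ^(x + 2*y)
        = (∑ y ∈ range (a+1-x), ζ^(x + 2*y)) + ζ^(x + 2*(a+1-x)) := by
      intro x hx
      rw [mem_range] at hx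
      rw [show a+2-x = (a+1-x)+1 by omega, Finset.sum_range_succ]
    rw [Finset.sum_congr rfl step, Finset.sum_add_distrib, Finset.sum_range_succ
      (fun x => ∑ y ∈ range (a+1-x), ζ^(x + 2*y)),
      show a+1-(a+1) = 0 by omega]
    simp only [Finset.range_zero, Finset.sum_empty, add_zero]
    rw [ih, lay1 hζ3 hζ1 (a+1)]
    have h3 : a % 3 = 0 ∨ a % 3 = 1 ∨ a % 3 = 2 := by omega
    rcases h3 with h | h | h
    · rw [if_pos (show 3 ∣ a by omega), if_neg (show ¬(3 ∣ a+1) by omega),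
        show (a+1)%3 = 1 by omega, if_neg (by norm_num), if_pos rfl]
      ring
    · rw [if_neg (show ¬(3 ∣ a) by omega), if_neg (show ¬(3 ∣ a+1) by omega),
        show (a+1)%3 = 2 by omega, if_neg (by norm_num), if_neg (by norm_num)]
      ring
    · rw [if_neg (show ¬(3 ∣ a) by omega), if_pos (show 3 ∣ a+1 by omega),
        show (a+1)%3 = 0 by omega, if_pos rfl]
      ring

lemma D2 {ζ : ℂ} (hζ3 : ζ^3 = 1) (hζ1 : ζ ≠ 1) (a : ℕ) :
    ∑ x ∈ range (a+1), ∑ y ∈ range (a+1-x), ζ^(2*x + y) =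
      if 3 ∣ a then 1 else 0 := by
  induction a with
  | zero => simp
  | succ a ih =>
    have step : ∀ x ∈ range (a+2), ∑ y ∈ range (a+2-x), ζ^(2*x + y)
        = (∑ y ∈ range (a+1-x), ζ^(2*x + y)) + ζ^(2*x + (a+1-x)) := by
      intro x hx
      rw [mem_range] at hx
      rw [show a+2-x = (a+1-x)+1 by omega, Finset.sum_range_succ]
    rw [Finset.sum_congr rfl step, Finset.sum_add_distrib, Finset.sum_range_succ
      (fun x => ∑ y ∈ range (a+1-x), ζ^(2*x + y)),
      show a+1-(a+1) = 0 by omega]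
    simp only [Finset.range_zero, Finset.sum_empty, add_zero]
    rw [ih, lay2 hζ3 hζ1 (a+1)]
    have h3 : a % 3 = 0 ∨ a % 3 = 1 ∨ a % 3 = 2 := by omega
    rcases h3 with h | h | h
    · rw [if_pos (show 3 ∣ a by omega), if_neg (show ¬(3 ∣ a+1) by omega),
        show (a+1)%3 = 1 by omega, if_neg (by norm_num), if_pos rfl]
      ring
    · rw [if_neg (show ¬(3 ∣ a) by omega), if_neg (show ¬(3 ∣ a+1) by omega),
        show (a+1)%3 = 2 by omega, if_neg (by norm_num), if_neg (by norm_num)]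
      ring
    · rw [if_neg (show ¬(3 ∣ a) by omega), if_pos (show 3 ∣ a+1 by omega),
        show (a+1)%3 = 0 by omega, if_pos rfl]
      ring


@[simp] lemma v7_5 {A : Type*} (z0 z1 z2 z3 z4 z5 z6 : A) :
    (![z0,z1,z2,z3,z4,z5,z6]) 5 = z5 := rfl
@[simp] lemma v7_6 {A : Type*} (z0 z1 z2 z3 z4 z5 z6 : A) :
    (![z0,z1,z2,z3,z4,z5,z6]) 6 = z6 := rfl


theorem stmt_5 (ℓ : ℕ) (k : ℕ) (hk : k = 1 ∨ k = 2) :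
    let ν : Fin 7 → ℕ := ![1, 1, 2, 2, 3, 2, 1]
    let X : Finset (Fin 7 → ℕ) :=
      (Fintype.piFinset fun _ => Finset.range (ℓ + 1)).filter
        (fun m => ∑ i, ν i * m i = ℓ)
    ((X.filter (fun m => m 0 = m 1 ∧ m 1 = m 6 ∧ m 2 = m 3 ∧ m 3 = m 5)).card : ℂ)
      = ∑ m ∈ X, Complex.exp (2 * Real.pi * Complex.I / 3) ^
          (k * (m 1 + 2 * m 3 + m 5 + 2 * m 6)) := by
  intro ν X
  have hsum : ∀ m : Fin 7 → ℕ,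
      (∑ i, ν i * m i) = m 0 + m 1 + 2*m 2 + 2*m 3 + 3*m 4 + 2*m 5 + m 6 := by
    intro m
    simp [ν, Fin.sum_univ_seven, show (![1,1,2,2,3,2,1] : Fin 7 → ℕ) 5 = 2 from rfl,
      show (![1,1,2,2,3,2,1] : Fin 7 → ℕ) 6 = 1 from rfl]
  have hmem : ∀ m : Fin 7 → ℕ, m ∈ X ↔
      ((∀ i, m i < ℓ+1) ∧ m 0 + m 1 + 2*m 2 + 2*m 3 + 3*m 4 + 2*m 5 + m 6 = ℓ) := by
    intro m
    rw [show X = (Fintype.piFinset fun _ => Finset.range (ℓ + 1)).filter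
        (fun m => ∑ i, ν i * m i = ℓ) from rfl,
      Finset.mem_filter, Fintype.mem_piFinset, hsum]
    simp
  set ζ : ℂ := Complex.exp (2 * Real.pi * Complex.I / 3) ^ k with hζdef
  have hζ3 : ζ^3 = 1 := by
    rw [hζdef, ← Complex.exp_nat_mul, ← Complex.exp_nat_mul]
    have h : ((3:ℕ):ℂ) * (((k:ℕ):ℂ) * (2 * Real.pi * Complex.I / 3))
        = (k:ℕ) * (2 * Real.pi * Complex.I) := by push_cast; ring
    rw [h, Complex.exp_nat_mul, Complex.exp_two_pi_mul_I, one_pow]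
  have hζ1 : ζ ≠ 1 := by
    rw [hζdef, ← Complex.exp_nat_mul]
    intro h
    rw [Complex.exp_eq_one_iff] at h
    obtain ⟨n, hn⟩ := h
    have hpi : (Real.pi : ℂ) ≠ 0 := by exact_mod_cast Real.pi_ne_zero
    have hne : (2 * (Real.pi:ℂ) * Complex.I) ≠ 0 :=
      mul_ne_zero (mul_ne_zero two_ne_zero hpi) Complex.I_ne_zero
    have h2 : (k : ℂ) = 3 * n := by
      apply mul_right_cancel₀ hne
      linear_combination 3 * hn
    have h3 : (k : ℤ) = 3 * n := by exact_mod_cast h2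
    omega
  -- rewrite RHS summand
  have hRHS0 : ∀ m ∈ X, Complex.exp (2 * Real.pi * Complex.I / 3) ^
      (k * (m 1 + 2 * m 3 + m 5 + 2 * m 6)) = ζ^(m 1 + 2*m 3 + m 5 + 2*m 6) := by
    intro m _
    rw [hζdef, ← pow_mul]
  rw [Finset.sum_congr rfl hRHS0]
  -- fiberwise decomposition
  set Z : Finset (ℕ × ℕ) := (range (ℓ+1) ×ˢ range (ℓ+1)).filter
    (fun p => p.1 + 2*p.2 ≤ ℓ ∧ 3 ∣ (ℓ - (p.1 + 2*p.2))) with hZdef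
  have hmemZ : ∀ p : ℕ × ℕ, p ∈ Z ↔
      (p.1 < ℓ+1 ∧ p.2 < ℓ+1 ∧ p.1 + 2*p.2 ≤ ℓ ∧ 3 ∣ (ℓ - (p.1 + 2*p.2))) := by
    intro p
    rw [hZdef, Finset.mem_filter, Finset.mem_product, Finset.mem_range, Finset.mem_range]
    tauto
  have hmaps : ∀ m ∈ X, (m 0 + m 1 + m 6, m 2 + m 3 + m 5) ∈ Z := by
    intro m hm
    rw [hmem] at hm
    obtain ⟨h1, h2⟩ := hm
    rw [hmemZ]
    refine ⟨by omega, by omega, by omega, ?_⟩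
    simp only
    omega
  rw [← Finset.sum_fiberwise_of_maps_to hmaps]
  -- per-fiber evaluation
  have hfiber : ∀ p ∈ Z,
      (∑ m ∈ X.filter (fun m => (m 0 + m 1 + m 6, m 2 + m 3 + m 5) = p),
        ζ^(m 1 + 2*m 3 + m 5 + 2*m 6))
      = (if 3 ∣ p.1 then (1:ℂ) else 0) * (if 3 ∣ p.2 then 1 else 0) := by
    rintro ⟨a, b⟩ hp
    rw [hmemZ] at hp
    obtain ⟨ha, hb, hab, hdvd⟩ := hp
    simp only at ha hb hab hdvd ⊢
    rw [← D1 hζ3 hζ1 a, ← D2 hζ3 hζ1 b]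
    rw [Finset.sum_sigma' (range (a+1)) (fun x => range (a+1-x)) (fun x y => ζ^(x+2*y)),
      Finset.sum_sigma' (range (b+1)) (fun x => range (b+1-x)) (fun x y => ζ^(2*x+y)),
      Finset.sum_mul_sum, ← Finset.sum_product']
    apply Finset.sum_nbij'
      (i := fun m => ((⟨m 1, m 6⟩ : Σ _ : ℕ, ℕ), (⟨m 3, m 5⟩ : Σ _ : ℕ, ℕ)))
      (j := fun q => ![a - q.1.1 - q.1.2, q.1.1, b - q.2.1 - q.2.2, q.2.1,
        (ℓ - (a + 2*b))/3, q.2.2, q.1.2])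
    · intro m hm
      rw [Finset.mem_filter, hmem] at hm
      obtain ⟨⟨h1, h2⟩, h3⟩ := hm
      rw [Prod.mk.injEq] at h3
      obtain ⟨h4, h5⟩ := h3
      simp only [Finset.mem_product, Finset.mem_sigma, Finset.mem_range]
      refine ⟨⟨by omega, by omega⟩, by omega, by omega⟩
    · rintro ⟨⟨x, y⟩, ⟨u, v⟩⟩ hq
      simp only [Finset.mem_product, Finset.mem_sigma, Finset.mem_range] at hq
      obtain ⟨⟨hx, hy⟩, hu, hv⟩ := hq
      rw [Finset.mem_filter, hmem]
      refine ⟨⟨?_, ?_⟩, ?_⟩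
      · intro i
        fin_cases i <;> simp <;> omega
      · simp only [show ∀ z0 z1 z2 z3 z4 z5 z6 : ℕ,
          (![z0,z1,z2,z3,z4,z5,z6] : Fin 7 → ℕ) 0 = z0 from fun _ _ _ _ _ _ _ => rfl]
        simp
        omega
      · simp
        omega
    · intro m hm
      rw [Finset.mem_filter, hmem] at hm
      obtain ⟨⟨h1, h2⟩, h3⟩ := hm
      rw [Prod.mk.injEq] at h3
      obtain ⟨h4, h5⟩ := h3
      funext i
      fin_cases i <;> simp <;> omega
    · rintro ⟨⟨x, y⟩, ⟨u, v⟩⟩ hq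
      simp
    · intro m hm
      rw [← pow_add]
      congr 1
      ring
  rw [Finset.sum_congr rfl hfiber]
  have hcomb : ∀ p ∈ Z, (if 3 ∣ p.1 then (1:ℂ) else 0) * (if 3 ∣ p.2 then 1 else 0)
      = if (3 ∣ p.1 ∧ 3 ∣ p.2) then (1:ℂ) else 0 := by
    intro p _
    by_cases h1 : 3 ∣ p.1 <;> by_cases h2 : 3 ∣ p.2 <;> simp [h1, h2]
  rw [Finset.sum_congr rfl hcomb, Finset.sum_boole]
  congr 1
  apply Finset.card_nbij'
    (i := fun m => (m 0 + m 1 + m 6, m 2 + m 3 + m 5))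
    (j := fun p => ![p.1/3, p.1/3, p.2/3, p.2/3, (ℓ - (p.1 + 2*p.2))/3, p.2/3, p.1/3])
  · intro m hm
    simp only [Finset.mem_coe] at hm ⊢
    rw [Finset.mem_filter, hmem] at hm
    obtain ⟨⟨h1, h2⟩, e1, e2, e3, e4⟩ := hm
    rw [Finset.mem_filter, hmemZ]
    refine ⟨⟨by omega, by omega, by omega, by simp only; omega⟩, by simp only; omega, by simp only; omega⟩
  · rintro ⟨u, v⟩ hp
    simp only [Finset.mem_coe] at hp ⊢
    rw [Finset.mem_filter, hmemZ] at hp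
    obtain ⟨⟨h1, h2, h3, h4⟩, h5, h6⟩ := hp
    simp only at h1 h2 h3 h4 h5 h6
    rw [Finset.mem_filter, hmem]
    refine ⟨⟨?_, ?_⟩, ?_, ?_, ?_, ?_⟩
    · intro i
      fin_cases i <;> simp <;> omega
    all_goals simp <;> omega
  · intro m hm
    simp only [Finset.mem_coe] at hm
    rw [Finset.mem_filter, hmem] at hm
    obtain ⟨⟨h1, h2⟩, e1, e2, e3, e4⟩ := hm
    funext i
    fin_cases i <;> simp <;> omega
  · rintro ⟨u, v⟩ hp
    simp only [Finset.mem_coe] at hp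
    rw [Finset.mem_filter, hmemZ] at hp
    obtain ⟨⟨h1, h2, h3, h4⟩, h5, h6⟩ := hp
    simp only at h1 h2 h3 h4 h5 h6
    simp
    constructor <;> omega
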